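/- Calderón–Zygmund smoothness estimate with exponent δ = 1/2 for the random square-function kernel: There is a constant C = C(N) such that whenever x, x₀, y ∈ ℝ^N satisfy |y−x₀| ≥ 2|x−x₀| > 0, one has E_ω Σ_{k∈ℤ} |Δ_k^{D(ω)} δ_y(x) − Δ_k^{D(ω)} δ_y(x₀)|² ≤ C |x−x₀| |x₀−y|^{−2N−1}, and also (for the transposed kernel) E_ω Σ_{k∈ℤ} |Δ_k^{D(ω)} δ_x(y) − Δ_k^{D(ω)} δ_{x₀}(y)|² ≤ C |x−x₀| |x₀−y|^{−2N−1}. -/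

import Mathlib

open MeasureTheory Filter Topology
open scoped ENNReal

noncomputable section

namespace Treil

/-- The cube of sidelength `2^k` of the dyadic lattice `t + 𝒟₀` that contains `x`. -/
def dcube {N : ℕ} (t : Fin N → ℝ) (k : ℤ) (x : Fin N → ℝ) : Set (Fin N → ℝ) :=
  {y | ∀ i, ⌊(y i - t i) / (2 : ℝ) ^ k⌋ = ⌊(x i - t i) / (2 : ℝ) ^ k⌋}

/-- The averaging operator `E_k` over the cubes of sidelength `2^k` of the (generalized)
dyadic lattice whose layer at scale `2^k` has offset `c k`. -/
def avg {N : ℕ} (c : ℤ → Fin N → ℝ) (k : ℤ) (f : (Fin N → ℝ) → ℝ) (x : Fin N → ℝ) : ℝ :=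
  (∫ y in dcube (c k) k x, f y) / ((2 : ℝ) ^ k) ^ (N : ℕ)

/-- The martingale difference `Δ_k = E_{k-1} - E_k`. -/
def mdiff {N : ℕ} (c : ℤ → Fin N → ℝ) (k : ℤ) (f : (Fin N → ℝ) → ℝ) (x : Fin N → ℝ) : ℝ :=
  avg c (k - 1) f x - avg c k f x

/-- The square of the dyadic square function, `|S_𝒟 f (x)|² = ∑_k |Δ_k f (x)|²`,
with values in `[0,∞]`. -/
def Ssq {N : ℕ} (c : ℤ → Fin N → ℝ) (f : (Fin N → ℝ) → ℝ) (x : Fin N → ℝ) : ℝ≥0∞ :=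
  ∑' k : ℤ, ENNReal.ofReal ((mdiff c k f x) ^ 2)

/-- The offset (at scale `2^k`) of the random dyadic lattice on `ℝ` built from the uniform
shift `u ∈ [0,1)` and the fair signs `ξ_j`, `j ≥ 1`, encoded as the binary digits of
`v ∈ [0,1)` (`ξ_j = -1` iff `⌊v 2^j⌋` is odd); the interval `I_0 = [u-1, u)` belongs to the
lattice, and `I_k` is obtained from `I_{k-1}` by adjoining the right neighbour if `ξ_k = +1`
and the left neighbour if `ξ_k = -1`. -/
def randOffset1 (u v : ℝ) (k : ℤ) : ℝ :=
  u - 1 - ∑ j ∈ Finset.range k.toNat, (if ⌊v * 2 ^ (j + 1)⌋ % 2 = 1 then (2 : ℝ) ^ j else 0)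

/-- The sample space for the random dyadic lattice in `ℝ^N`: each of the `N` independent
coordinate lattices is driven by a pair (uniform shift, digit-encoded fair signs). -/
abbrev RSpace (N : ℕ) := Fin N → ℝ × ℝ

/-- The probability measure of the random dyadic lattice in `ℝ^N`. -/
def randMeasure (N : ℕ) : Measure (RSpace N) :=
  Measure.pi fun _ =>
    (volume.restrict (Set.Ico (0 : ℝ) 1)).prod (volume.restrict (Set.Ico (0 : ℝ) 1))

/-- The per-scale offsets of the random dyadic lattice `𝒟(ω)` in `ℝ^N`. -/
def randOffset {N : ℕ} (ω : RSpace N) (k : ℤ) : Fin N → ℝ :=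
  fun i => randOffset1 (ω i).1 (ω i).2 k

/-- An (axis-parallel, half-open) cube in `ℝ^N`. -/
def IsPCube {N : ℕ} (Q : Set (Fin N → ℝ)) : Prop :=
  ∃ (a : Fin N → ℝ) (l : ℝ), 0 < l ∧ Q = Set.univ.pi fun i => Set.Ico (a i) (a i + l)

/-- An `H¹`-atom: supported in a cube `Q`, bounded by `|Q|⁻¹`, with zero mean. -/
def IsAtom {N : ℕ} (a : (Fin N → ℝ) → ℝ) : Prop :=
  ∃ Q : Set (Fin N → ℝ), IsPCube Q ∧ (∀ x, x ∉ Q → a x = 0) ∧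
    (∀ x, |a x| ≤ ((volume Q).toReal)⁻¹) ∧ (∫ x, a x) = 0

/-- The atomic `H¹(ℝ^N)` norm: the infimum of `∑ |λ_j|` over all decompositions
`f = ∑ λ_j a_j` converging in `L¹`, with atoms `a_j`. -/
def H1norm {N : ℕ} (f : (Fin N → ℝ) → ℝ) : ℝ≥0∞ :=
  ⨅ (lam : ℕ → ℝ) (a : ℕ → (Fin N → ℝ) → ℝ) (_ : ∀ j, IsAtom (a j))
    (_ : Tendsto (fun m => ∫ x, |f x - ∑ j ∈ Finset.range m, lam j * a j x|) atTop (𝓝 0)),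
    ∑' j, ENNReal.ofReal |lam j|
/-- The martingale difference of the unit point mass `δ_y`:
`Δ_k δ_y (x) = 1_{Q'}(y)/|Q'| - 1_Q(y)/|Q|`, where `Q` is the cube of sidelength `2^k`
containing `x` and `Q'` its child containing `x`. -/
def mdiffDelta {N : ℕ} (c : ℤ → Fin N → ℝ) (k : ℤ) (y x : Fin N → ℝ) : ℝ :=
  (dcube (c (k - 1)) (k - 1) x).indicator (fun _ => (((2 : ℝ) ^ (k - 1)) ^ (N : ℕ))⁻¹) y -
    (dcube (c k) k x).indicator (fun _ => (((2 : ℝ) ^ k) ^ (N : ℕ))⁻¹) y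


def Snat (v : ℝ) (K : ℕ) : ℕ :=
  ∑ j ∈ Finset.range K, if ⌊v * 2 ^ (j + 1)⌋ % 2 = 1 then 2 ^ j else 0

lemma Snat_succ (v : ℝ) (K : ℕ) :
    Snat v (K + 1) = Snat v K + (if ⌊v * 2 ^ (K + 1)⌋ % 2 = 1 then 2 ^ K else 0) := by
  simp [Snat, Finset.sum_range_succ]

lemma Snat_lt (v : ℝ) (K : ℕ) : Snat v K < 2 ^ K := by
  induction K with
  | zero => simp [Snat]
  | succ K ih =>
    rw [Snat_succ]
    have h : (if ⌊v * 2 ^ (K + 1)⌋ % 2 = 1 then 2 ^ K else 0) ≤ 2 ^ K := by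
      split <;> simp
    have : (2:ℕ) ^ (K+1) = 2 ^ K * 2 := pow_succ 2 K
    omega

lemma floor_div_two (x : ℝ) : ⌊x / 2⌋ = ⌊x⌋ / 2 := by
  have h0 := Int.floor_le x
  have h1 := Int.lt_floor_add_one x
  have e := Int.mul_ediv_add_emod ⌊x⌋ 2
  have e2 : ⌊x⌋ % 2 = 0 ∨ ⌊x⌋ % 2 = 1 := by omega
  rw [Int.floor_eq_iff]
  constructor
  · have : ((2 * (⌊x⌋ / 2) : ℤ) : ℝ) ≤ (⌊x⌋ : ℝ) := by exact_mod_cast (by omega : (2 * (⌊x⌋ / 2) : ℤ) ≤ ⌊x⌋)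
    push_cast at this ⊢
    linarith
  · have hR : ((⌊x⌋ : ℝ)) ≤ 2 * ((⌊x⌋ / 2 : ℤ) : ℝ) + 1 := by
      exact_mod_cast (by omega : (⌊x⌋ : ℤ) ≤ 2 * (⌊x⌋ / 2) + 1)
    push_cast at hR ⊢
    linarith

lemma floor_det {v w : ℝ} (hv : v ∈ Set.Ico (0:ℝ) 1) (hw : w ∈ Set.Ico (0:ℝ) 1) :
    ∀ K : ℕ, Snat v K = Snat w K → ⌊v * 2 ^ K⌋ = ⌊w * 2 ^ K⌋ := by
  intro K
  induction K with
  | zero =>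
    intro _
    simp only [pow_zero, mul_one]
    rw [Int.floor_eq_zero_iff.2 hv, Int.floor_eq_zero_iff.2 hw]
  | succ K ih =>
    intro h
    rw [Snat_succ, Snat_succ] at h
    have hb1 := Snat_lt v K
    have hb2 := Snat_lt w K
    have hS : Snat v K = Snat w K ∧
        ((⌊v * 2 ^ (K + 1)⌋ % 2 = 1) ↔ (⌊w * 2 ^ (K + 1)⌋ % 2 = 1)) := by
      by_cases c1 : ⌊v * 2 ^ (K + 1)⌋ % 2 = 1 <;>
        by_cases c2 : ⌊w * 2 ^ (K + 1)⌋ % 2 = 1 <;>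
        simp [c1, c2] at h ⊢ <;> omega
    have FK := ih hS.1
    have h2v : ⌊v * 2 ^ K⌋ = ⌊v * 2 ^ (K+1)⌋ / 2 := by
      rw [show v * 2 ^ K = v * 2 ^ (K+1) / 2 by ring, floor_div_two]
    have h2w : ⌊w * 2 ^ K⌋ = ⌊w * 2 ^ (K+1)⌋ / 2 := by
      rw [show w * 2 ^ K = w * 2 ^ (K+1) / 2 by ring, floor_div_two]
    have hbit := hS.2
    omega

lemma Snat_measurable (K : ℕ) : Measurable fun v : ℝ => Snat v K := by
  apply Finset.measurable_sum
  intro j _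
  have hf : Measurable fun v : ℝ => ⌊v * 2 ^ (j + 1)⌋ :=
    Int.measurable_floor.comp (measurable_id.mul_const _)
  have hs : MeasurableSet {v : ℝ | ⌊v * 2 ^ (j + 1)⌋ % 2 = 1} := by
    have : {v : ℝ | ⌊v * 2 ^ (j + 1)⌋ % 2 = 1}
        = (fun v : ℝ => ⌊v * 2 ^ (j + 1)⌋) ⁻¹' {z : ℤ | z % 2 = 1} := rfl
    rw [this]
    exact hf (Set.to_countable _).measurableSet
  exact Measurable.ite hs measurable_const measurable_const

lemma measure_Snat_le (K : ℕ) (s : ℕ) :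
    volume ({v : ℝ | Snat v K = s} ∩ Set.Ico (0:ℝ) 1) ≤ ENNReal.ofReal (1 / 2 ^ K) := by
  rcases Set.eq_empty_or_nonempty ({v : ℝ | Snat v K = s} ∩ Set.Ico (0:ℝ) 1) with he | ⟨v₀, hv₀⟩
  · simp [he]
  · have hsub : {v : ℝ | Snat v K = s} ∩ Set.Ico (0:ℝ) 1 ⊆
        Set.Ico ((⌊v₀ * 2 ^ K⌋ : ℝ) / 2 ^ K) ((⌊v₀ * 2 ^ K⌋ + 1 : ℝ) / 2 ^ K) := by
      rintro v ⟨hv1, hv2⟩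
      have hfe : ⌊v * 2 ^ K⌋ = ⌊v₀ * 2 ^ K⌋ :=
        floor_det hv2 hv₀.2 K (hv1.trans hv₀.1.symm)
      have hp : (0:ℝ) < 2 ^ K := by positivity
      have h1 := Int.floor_le (v * 2 ^ K)
      have h2 := Int.lt_floor_add_one (v * 2 ^ K)
      rw [hfe] at h1 h2
      constructor
      · rw [div_le_iff₀ hp]; linarith
      · rw [lt_div_iff₀ hp]; push_cast; linarith
    calc volume _ ≤ volume (Set.Ico ((⌊v₀ * 2 ^ K⌋ : ℝ) / 2 ^ K)
          ((⌊v₀ * 2 ^ K⌋ + 1 : ℝ) / 2 ^ K)) := measure_mono hsub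
      _ = ENNReal.ofReal ((⌊v₀ * 2 ^ K⌋ + 1 : ℝ) / 2 ^ K - (⌊v₀ * 2 ^ K⌋ : ℝ) / 2 ^ K) := by
          rw [Real.volume_Ico]
      _ = ENNReal.ofReal (1 / 2 ^ K) := by ring_nf

lemma randOffset1_eq (u v : ℝ) (k : ℤ) :
    randOffset1 u v k = u - 1 - (Snat v k.toNat : ℝ) := by
  unfold randOffset1 Snat
  rw [Nat.cast_sum]
  congr 1
  refine Finset.sum_congr rfl fun j _ => ?_
  rw [apply_ite (Nat.cast : ℕ → ℝ)]
  push_cast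
  rfl

lemma offset_step (u v : ℝ) (k : ℤ) :
    ∃ m : ℤ, randOffset1 u v k = randOffset1 u v (k - 1) + m * 2 ^ (k - 1) := by
  rcases le_or_gt k 0 with hk | hk
  · refine ⟨0, ?_⟩
    have h1 : k.toNat = 0 := by omega
    have h2 : (k - 1).toNat = 0 := by omega
    simp [randOffset1, h1, h2]
  · have hk1 : k.toNat = (k - 1).toNat + 1 := by omega
    refine ⟨if ⌊v * 2 ^ ((k - 1).toNat + 1)⌋ % 2 = 1 then -1 else 0, ?_⟩
    rw [randOffset1, randOffset1, hk1, Finset.sum_range_succ]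
    have h2 : ((2:ℝ) ^ (k - 1).toNat) = (2:ℝ) ^ ((k:ℤ) - 1) := by
      rw [← zpow_natCast]
      congr 1
      omega
    split_ifs <;> rw [← h2] <;> ring

lemma floor_div_two' (x : ℝ) : ⌊x / 2⌋ = ⌊x⌋ / 2 := by
  have h0 := Int.floor_le x
  have h1 := Int.lt_floor_add_one x
  have e := Int.mul_ediv_add_emod ⌊x⌋ 2
  have e2 : ⌊x⌋ % 2 = 0 ∨ ⌊x⌋ % 2 = 1 := by omega
  rw [Int.floor_eq_iff]
  constructor
  · have : ((2 * (⌊x⌋ / 2) : ℤ) : ℝ) ≤ (⌊x⌋ : ℝ) := by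
      exact_mod_cast (by omega : (2 * (⌊x⌋ / 2) : ℤ) ≤ ⌊x⌋)
    push_cast at this ⊢
    linarith
  · have hR : ((⌊x⌋ : ℝ)) ≤ 2 * ((⌊x⌋ / 2 : ℤ) : ℝ) + 1 := by
      exact_mod_cast (by omega : (⌊x⌋ : ℤ) ≤ 2 * (⌊x⌋ / 2) + 1)
    push_cast at hR ⊢
    linarith

lemma floor_step {t t' a b : ℝ} {q : ℝ} (hq : 0 < q) (m : ℤ) (ht : t = t' + m * q)
    (h : ⌊(a - t') / q⌋ = ⌊(b - t') / q⌋) : ⌊(a - t) / (2 * q)⌋ = ⌊(b - t) / (2 * q)⌋ := by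
  have ea : (a - t) / (2 * q) = ((a - t') / q - m) / 2 := by
    rw [ht]; field_simp; ring
  have eb : (b - t) / (2 * q) = ((b - t') / q - m) / 2 := by
    rw [ht]; field_simp; ring
  rw [ea, eb, floor_div_two', floor_div_two', Int.floor_sub_intCast, Int.floor_sub_intCast, h]

lemma floor_ne_iff {A B : ℝ} (hab : A ≤ B) : ⌊A⌋ ≠ ⌊B⌋ ↔ ∃ m : ℤ, A < m ∧ (m : ℝ) ≤ B := by
  constructor
  · intro h
    have hlt : ⌊A⌋ < ⌊B⌋ := lt_of_le_of_ne (Int.floor_le_floor hab) h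
    refine ⟨⌊B⌋, ?_, Int.floor_le B⟩
    have : ((⌊A⌋ : ℝ)) + 1 ≤ (⌊B⌋ : ℝ) := by exact_mod_cast hlt
    linarith [Int.lt_floor_add_one A]
  · rintro ⟨m, h1, h2⟩ h
    have hA : ⌊A⌋ < m := Int.floor_lt.2 h1
    have hB : m ≤ ⌊B⌋ := Int.le_floor.2 h2
    omega

lemma count_sum (c d q : ℝ) (hq0 : 0 < q) (hq1 : q ≤ 1) (hd : 0 ≤ d) :
    ∑' n : ℤ, volume (Set.Ioc (c + n * q) (c + n * q + d) ∩ Set.Ico (0:ℝ) 1)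
      ≤ ENNReal.ofReal (4 * d / q) := by
  classical
  set f : ℤ → ℝ≥0∞ :=
    fun n => volume (Set.Ioc (c + n * q) (c + n * q + d) ∩ Set.Ico (0:ℝ) 1) with hf
  have hbound : ∀ n, f n ≤ ENNReal.ofReal (min d 1) := by
    intro n
    rcases le_total d 1 with hd1 | hd1
    · calc f n ≤ volume (Set.Ioc (c + n * q) (c + n * q + d)) :=
            measure_mono Set.inter_subset_left
        _ = ENNReal.ofReal d := by rw [Real.volume_Ioc]; ring_nf
        _ = ENNReal.ofReal (min d 1) := by rw [min_eq_left hd1]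
    · calc f n ≤ volume (Set.Ico (0:ℝ) 1) := measure_mono Set.inter_subset_right
        _ = ENNReal.ofReal 1 := by rw [Real.volume_Ico]; norm_num
        _ = ENNReal.ofReal (min d 1) := by rw [min_eq_right hd1]
  set lo : ℤ := ⌈(-c - d) / q⌉ with hlo
  set hi : ℤ := ⌊(1 - c) / q⌋ with hhi
  have hsupp : ∀ n : ℤ, n ∉ Finset.Icc lo hi → f n = 0 := by
    intro n hn
    rw [hf]
    by_contra h
    have hne : (Set.Ioc (c + n * q) (c + n * q + d) ∩ Set.Ico (0:ℝ) 1).Nonempty := by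
      exact nonempty_of_measure_ne_zero h
    obtain ⟨x, ⟨hx1, hx2⟩, hx3, hx4⟩ := hne
    apply hn
    rw [Finset.mem_Icc]
    constructor
    · rw [hlo, Int.ceil_le]
      rw [div_le_iff₀ hq0]
      nlinarith
    · rw [hhi, Int.le_floor]
      rw [le_div_iff₀ hq0]
      nlinarith
  have hcard : ((Finset.Icc lo hi).card : ℝ) * min d 1 ≤ 4 * d / q := by
    have hcard1 : ((Finset.Icc lo hi).card : ℝ) ≤ (1 + d) / q + 1 := by
      rcases le_or_gt lo hi with hlh | hlh
      · have h1 : (lo : ℝ) ≥ (-c - d) / q := Int.le_ceil _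
        have h2 : (hi : ℝ) ≤ (1 - c) / q := Int.floor_le _
        have : (Finset.Icc lo hi).card = (hi + 1 - lo).toNat := Int.card_Icc lo hi
        rw [this]
        have h3 : ((hi + 1 - lo).toNat : ℝ) = ((hi : ℝ) + 1 - lo) := by
          have h4 : ((hi + 1 - lo).toNat : ℤ) = hi + 1 - lo := Int.toNat_of_nonneg (by omega)
          have h5 := congrArg (fun z : ℤ => (z : ℝ)) h4
          push_cast at h5
          push_cast
          linarith
        rw [h3]
        have : (1 - c) / q - (-c - d) / q = (1 + d) / q := by field_simp; ring
        linarith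
      · have : Finset.Icc lo hi = ∅ := Finset.Icc_eq_empty (by omega)
        rw [this]
        simp
        positivity
    have hm0 : 0 ≤ min d 1 := le_min hd zero_le_one
    rcases le_total d 1 with hd1 | hd1
    · rw [min_eq_left hd1]
      have : (1 + d) / q + 1 ≤ 4 / q := by
        rw [div_add' _ _ _ (ne_of_gt hq0), div_le_div_iff₀ hq0 hq0]
        nlinarith
      calc ((Finset.Icc lo hi).card : ℝ) * d ≤ (4 / q) * d := by
            apply mul_le_mul_of_nonneg_right _ hd
            linarith
        _ = 4 * d / q := by ring
    · rw [min_eq_right hd1]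
      have : (1 + d) / q + 1 ≤ 4 * d / q := by
        rw [div_add' _ _ _ (ne_of_gt hq0), div_le_div_iff₀ hq0 hq0]
        nlinarith
      linarith
  calc ∑' n : ℤ, f n = ∑ n ∈ Finset.Icc lo hi, f n := tsum_eq_sum hsupp
    _ ≤ ∑ _n ∈ Finset.Icc lo hi, ENNReal.ofReal (min d 1) :=
        Finset.sum_le_sum fun n _ => hbound n
    _ = (Finset.Icc lo hi).card • ENNReal.ofReal (min d 1) := by
        rw [Finset.sum_const]
    _ = ENNReal.ofReal (((Finset.Icc lo hi).card : ℝ) * min d 1) := by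
        rw [nsmul_eq_mul, ← ENNReal.ofReal_natCast, ← ENNReal.ofReal_mul (by positivity)]
    _ ≤ ENNReal.ofReal (4 * d / q) := ENNReal.ofReal_le_ofReal hcard


def unif2 : Measure (ℝ × ℝ) :=
  (volume.restrict (Set.Ico (0 : ℝ) 1)).prod (volume.restrict (Set.Ico (0 : ℝ) 1))

lemma sep_prob_le {a b : ℝ} (hab : a ≤ b) (k : ℤ) :
    unif2 {p : ℝ × ℝ |
        ⌊(a - randOffset1 p.1 p.2 k) / 2 ^ k⌋ ≠ ⌊(b - randOffset1 p.1 p.2 k) / 2 ^ k⌋}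
      ≤ ENNReal.ofReal (4 * (b - a) / 2 ^ k) := by
  classical
  set K : ℕ := k.toNat with hK
  set d : ℝ := b - a with hdd
  have hd : 0 ≤ d := by rw [hdd]; linarith
  set q : ℝ := (2:ℝ) ^ k with hq
  have hq0 : (0:ℝ) < q := by rw [hq]; positivity
  set q' : ℝ := (2:ℝ) ^ (k - (K:ℤ)) with hq'
  have hq'0 : (0:ℝ) < q' := by rw [hq']; positivity
  have hq'1 : q' ≤ 1 := by
    rw [hq']
    calc (2:ℝ) ^ (k - (K:ℤ)) ≤ (2:ℝ) ^ (0:ℤ) := by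
          apply zpow_le_zpow_right₀ one_le_two
          omega
      _ = 1 := by norm_num
  have hqq' : (2:ℝ) ^ K * q' = q := by
    rw [hq', hq, ← zpow_natCast (2:ℝ) K, ← zpow_add₀ (by norm_num : (2:ℝ) ≠ 0)]
    congr 1
    ring
  set h : ℤ → ℝ≥0∞ := fun n =>
    volume (Set.Ioc (a + 1 + (n:ℝ) * q') (a + 1 + (n:ℝ) * q' + d) ∩ Set.Ico (0:ℝ) 1) with hh
  set F : ℕ × ℤ → ℝ≥0∞ := fun sm =>
    if sm.1 < 2 ^ K then ENNReal.ofReal (1 / 2 ^ K) * h ((sm.1 : ℤ) - sm.2 * 2 ^ K) else 0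
    with hF
  have hoff : ∀ (s : ℕ) (m : ℤ), s < 2 ^ K →
      a + 1 + (s:ℝ) - m * q = a + 1 + (((s : ℤ) - m * 2 ^ K : ℤ) : ℝ) * q' := by
    intro s m hs
    rcases le_or_gt 1 k with hk1 | hk1
    · have hKk : ((K:ℤ)) = k := by omega
      have hq'one : q' = 1 := by rw [hq', hKk]; simp
      have hqK : q = (2:ℝ) ^ K := by rw [← hqq', hq'one, mul_one]
      rw [hq'one, hqK]
      push_cast
      ring
    · have hK0 : K = 0 := by omega
      have hs0 : s = 0 := by
        rw [hK0] at hs; omega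
      have hqv : q' = q := by
        rw [hq', hq, hK0]
        norm_num
      rw [hK0, hs0, hqv]
      push_cast
      ring
  -- inclusion into rectangles
  have hincl : {p : ℝ × ℝ |
        ⌊(a - randOffset1 p.1 p.2 k) / 2 ^ k⌋ ≠ ⌊(b - randOffset1 p.1 p.2 k) / 2 ^ k⌋}
      ⊆ ⋃ sm : ℕ × ℤ,
          (Set.Ioc (a + 1 + (sm.1:ℝ) - sm.2 * q) (a + 1 + (sm.1:ℝ) - sm.2 * q + d))
            ×ˢ {v : ℝ | Snat v K = sm.1} := by
    rintro ⟨u, v⟩ hp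
    simp only [Set.mem_setOf_eq] at hp
    rw [← hq] at hp
    have hAB : (a - randOffset1 u v k) / q ≤ (b - randOffset1 u v k) / q := by
      gcongr
    obtain ⟨m, hm1, hm2⟩ := (floor_ne_iff hAB).1 hp
    rw [randOffset1_eq, ← hK] at hm1 hm2
    have hu1 : a + 1 + ((Snat v K : ℕ) : ℝ) - m * q < u := by
      have h1 := (div_lt_iff₀ hq0).1 hm1
      linarith
    have hu2 : u ≤ a + 1 + ((Snat v K : ℕ) : ℝ) - m * q + d := by
      have h2 := (le_div_iff₀ hq0).1 hm2
      rw [hdd]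
      linarith
    refine Set.mem_iUnion.2 ⟨(Snat v K, m), ⟨⟨hu1, hu2⟩, rfl⟩⟩
  have hrect : ∀ sm : ℕ × ℤ,
      unif2 ((Set.Ioc (a + 1 + (sm.1:ℝ) - sm.2 * q) (a + 1 + (sm.1:ℝ) - sm.2 * q + d))
            ×ˢ {v : ℝ | Snat v K = sm.1}) ≤ F sm := by
    rintro ⟨s, m⟩
    rw [unif2, Measure.prod_prod, Measure.restrict_apply' measurableSet_Ico,
      Measure.restrict_apply' measurableSet_Ico]
    by_cases hs : s < 2 ^ K
    · rw [hF]
      simp only [if_pos hs]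
      rw [hoff s m hs]
      rw [mul_comm]
      exact mul_le_mul_left (measure_Snat_le K s) _
    · rw [hF]
      simp only [if_neg hs]
      have hempty : {v : ℝ | Snat v K = s} ∩ Set.Ico (0:ℝ) 1 = ∅ := by
        ext v
        simp only [Set.mem_inter_iff, Set.mem_setOf_eq, Set.mem_empty_iff_false, iff_false]
        rintro ⟨h1, _⟩
        exact hs (h1 ▸ Snat_lt v K)
      rw [hempty]
      simp
  have hι : Function.Injective
      (fun x : {p : ℕ × ℤ // p.1 < 2 ^ K} => ((x : ℕ × ℤ).1 : ℤ) - (x : ℕ × ℤ).2 * 2 ^ K) := by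
    rintro ⟨⟨s, m⟩, hs⟩ ⟨⟨s', m'⟩, hs'⟩ hE
    simp only [Subtype.mk.injEq, Prod.mk.injEq] at hE ⊢
    have hT : (0:ℤ) < 2 ^ K := by positivity
    have hsZ : (s:ℤ) < 2 ^ K := by exact_mod_cast hs
    have hs'Z : (s':ℤ) < 2 ^ K := by exact_mod_cast hs'
    have h0s : (0:ℤ) ≤ (s:ℤ) := Int.ofNat_nonneg s
    have h0s' : (0:ℤ) ≤ (s':ℤ) := Int.ofNat_nonneg s'
    have hmm : m = m' := by
      rcases lt_trichotomy m m' with hc | hc | hc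
      · exfalso
        have h1 : m - m' ≤ -1 := by omega
        nlinarith
      · exact hc
      · exfalso
        have h1 : (1:ℤ) ≤ m - m' := by omega
        nlinarith
    refine ⟨?_, hmm⟩
    rw [hmm] at hE
    have : (s:ℤ) = s' := by omega
    exact_mod_cast this
  have hsupp : Function.support F ⊆ {p : ℕ × ℤ | p.1 < 2 ^ K} := by
    intro p hp
    simp only [Function.mem_support, hF] at hp
    by_contra hc
    simp only [Set.mem_setOf_eq] at hc
    exact hp (if_neg hc)
  calc unif2 _ ≤ unif2 (⋃ sm : ℕ × ℤ,
          (Set.Ioc (a + 1 + (sm.1:ℝ) - sm.2 * q) (a + 1 + (sm.1:ℝ) - sm.2 * q + d))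
            ×ˢ {v : ℝ | Snat v K = sm.1}) := measure_mono hincl
    _ ≤ ∑' sm : ℕ × ℤ, unif2 ((Set.Ioc (a + 1 + (sm.1:ℝ) - sm.2 * q)
          (a + 1 + (sm.1:ℝ) - sm.2 * q + d)) ×ˢ {v : ℝ | Snat v K = sm.1}) :=
        measure_iUnion_le _
    _ ≤ ∑' sm : ℕ × ℤ, F sm := ENNReal.tsum_le_tsum hrect
    _ = ∑' sm : {p : ℕ × ℤ // p.1 < 2 ^ K}, F sm :=
        (tsum_subtype_eq_of_support_subset hsupp).symm
    _ = ∑' sm : {p : ℕ × ℤ // p.1 < 2 ^ K},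
          ENNReal.ofReal (1 / 2 ^ K) * h (((sm : ℕ × ℤ).1 : ℤ) - (sm : ℕ × ℤ).2 * 2 ^ K) :=
        tsum_congr fun x => by rw [hF]; exact if_pos x.2
    _ = ENNReal.ofReal (1 / 2 ^ K) *
          ∑' sm : {p : ℕ × ℤ // p.1 < 2 ^ K},
            h (((sm : ℕ × ℤ).1 : ℤ) - (sm : ℕ × ℤ).2 * 2 ^ K) := ENNReal.tsum_mul_left
    _ ≤ ENNReal.ofReal (1 / 2 ^ K) * ∑' n : ℤ, h n :=
        mul_le_mul_right (ENNReal.tsum_comp_le_tsum_of_injective hι h) _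
    _ ≤ ENNReal.ofReal (1 / 2 ^ K) * ENNReal.ofReal (4 * d / q') :=
        mul_le_mul_right (count_sum (a + 1) d q' hq'0 hq'1 hd) _
    _ = ENNReal.ofReal (4 * d / q) := by
        rw [← ENNReal.ofReal_mul (by positivity)]
        congr 1
        rw [← hqq', div_mul_div_comm, one_mul]

lemma sep_prob (k : ℤ) (a b : ℝ) :
    unif2 {p : ℝ × ℝ |
        ⌊(a - randOffset1 p.1 p.2 k) / 2 ^ k⌋ ≠ ⌊(b - randOffset1 p.1 p.2 k) / 2 ^ k⌋}
      ≤ ENNReal.ofReal (4 * |a - b| / 2 ^ k) := by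
  rcases le_total a b with h | h
  · rw [abs_sub_comm, abs_of_nonneg (by linarith)]
    exact sep_prob_le h k
  · have hset : {p : ℝ × ℝ |
        ⌊(a - randOffset1 p.1 p.2 k) / 2 ^ k⌋ ≠ ⌊(b - randOffset1 p.1 p.2 k) / 2 ^ k⌋}
        = {p : ℝ × ℝ |
        ⌊(b - randOffset1 p.1 p.2 k) / 2 ^ k⌋ ≠ ⌊(a - randOffset1 p.1 p.2 k) / 2 ^ k⌋} := by
      ext p; exact ne_comm
    rw [hset, abs_of_nonneg (by linarith)]
    exact sep_prob_le h k

lemma randOffset1_measurable (k : ℤ) :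
    Measurable fun p : ℝ × ℝ => randOffset1 p.1 p.2 k := by
  have he : (fun p : ℝ × ℝ => randOffset1 p.1 p.2 k)
      = fun p => p.1 - 1 - ((Snat p.2 k.toNat : ℝ)) := by
    funext p; rw [randOffset1_eq]
  rw [he]
  apply Measurable.sub
  · exact measurable_fst.sub measurable_const
  · exact (measurable_from_top.comp ((Snat_measurable k.toNat).comp measurable_snd))

lemma sepSet_measurable (k : ℤ) (a b : ℝ) :
    MeasurableSet {p : ℝ × ℝ |
      ⌊(a - randOffset1 p.1 p.2 k) / 2 ^ k⌋ ≠ ⌊(b - randOffset1 p.1 p.2 k) / 2 ^ k⌋} := by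
  have hf : Measurable fun p : ℝ × ℝ => ⌊(a - randOffset1 p.1 p.2 k) / 2 ^ k⌋ :=
    Int.measurable_floor.comp (((measurable_const.sub (randOffset1_measurable k))).div_const _)
  have hg : Measurable fun p : ℝ × ℝ => ⌊(b - randOffset1 p.1 p.2 k) / 2 ^ k⌋ :=
    Int.measurable_floor.comp (((measurable_const.sub (randOffset1_measurable k))).div_const _)
  have : MeasurableSet {p : ℝ × ℝ |
      ⌊(a - randOffset1 p.1 p.2 k) / 2 ^ k⌋ = ⌊(b - randOffset1 p.1 p.2 k) / 2 ^ k⌋} :=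
    measurableSet_eq_fun hf hg
  exact this.compl

instance : IsProbabilityMeasure (volume.restrict (Set.Ico (0:ℝ) 1)) := by
  constructor
  rw [Measure.restrict_apply MeasurableSet.univ]
  simp [Real.volume_Ico]

instance : IsProbabilityMeasure unif2 := by
  unfold unif2
  infer_instance

def sepG {N : ℕ} (x x₀ : Fin N → ℝ) (k : ℤ) : Set (RSpace N) :=
  {ω | ∃ i, ⌊(x i - randOffset ω k i) / (2:ℝ) ^ k⌋ ≠ ⌊(x₀ i - randOffset ω k i) / (2:ℝ) ^ k⌋}

lemma sepG_eq {N : ℕ} (x x₀ : Fin N → ℝ) (k : ℤ) :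
    sepG x x₀ k = ⋃ i : Fin N, (Function.eval i) ⁻¹' {p : ℝ × ℝ |
      ⌊(x i - randOffset1 p.1 p.2 k) / 2 ^ k⌋ ≠ ⌊(x₀ i - randOffset1 p.1 p.2 k) / 2 ^ k⌋} := by
  ext ω
  simp only [sepG, Set.mem_setOf_eq, Set.mem_iUnion, Set.mem_preimage, Function.eval]
  rfl

lemma sepG_measurable {N : ℕ} (x x₀ : Fin N → ℝ) (k : ℤ) :
    MeasurableSet (sepG x x₀ k) := by
  rw [sepG_eq]
  exact MeasurableSet.iUnion fun i =>
    (sepSet_measurable k (x i) (x₀ i)).preimage (measurable_pi_apply i)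

lemma measure_sepG_le {N : ℕ} (x x₀ : Fin N → ℝ) (k : ℤ) :
    randMeasure N (sepG x x₀ k) ≤ (N : ℝ≥0∞) * ENNReal.ofReal (4 * dist x x₀ / 2 ^ k) := by
  classical
  rw [sepG_eq]
  calc randMeasure N _ ≤ ∑' i : Fin N, randMeasure N ((Function.eval i) ⁻¹' {p : ℝ × ℝ |
        ⌊(x i - randOffset1 p.1 p.2 k) / 2 ^ k⌋ ≠ ⌊(x₀ i - randOffset1 p.1 p.2 k) / 2 ^ k⌋}) :=
      measure_iUnion_le _
    _ ≤ ∑' i : Fin N, ENNReal.ofReal (4 * dist x x₀ / 2 ^ k) := by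
      apply ENNReal.tsum_le_tsum
      intro i
      have hcalc : randMeasure N ((Function.eval i) ⁻¹' {p : ℝ × ℝ |
          ⌊(x i - randOffset1 p.1 p.2 k) / 2 ^ k⌋ ≠ ⌊(x₀ i - randOffset1 p.1 p.2 k) / 2 ^ k⌋})
          = unif2 {p : ℝ × ℝ |
          ⌊(x i - randOffset1 p.1 p.2 k) / 2 ^ k⌋ ≠ ⌊(x₀ i - randOffset1 p.1 p.2 k) / 2 ^ k⌋} := by
        rw [Set.eval_preimage]
        unfold randMeasure
        rw [MeasureTheory.Measure.pi_pi, Finset.prod_eq_single i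
          (fun j _ hj => by rw [Function.update_of_ne hj]; exact measure_univ)
          (fun hi => absurd (Finset.mem_univ i) hi)]
        rw [Function.update_self]
        rfl
      rw [hcalc]
      calc unif2 _ ≤ ENNReal.ofReal (4 * |x i - x₀ i| / 2 ^ k) := sep_prob k (x i) (x₀ i)
        _ ≤ ENNReal.ofReal (4 * dist x x₀ / 2 ^ k) := by
          apply ENNReal.ofReal_le_ofReal
          have : |x i - x₀ i| ≤ dist x x₀ := by
            rw [← Real.dist_eq]
            exact dist_le_pi_dist x x₀ i
          gcongr
    _ = (N : ℝ≥0∞) * ENNReal.ofReal (4 * dist x x₀ / 2 ^ k) := by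
      rw [tsum_fintype]
      simp [Finset.sum_const, nsmul_eq_mul]

lemma dcube_congr {N : ℕ} {t : Fin N → ℝ} {k : ℤ} {x x₀ : Fin N → ℝ}
    (h : ∀ i, ⌊(x i - t i) / (2:ℝ) ^ k⌋ = ⌊(x₀ i - t i) / (2:ℝ) ^ k⌋) :
    dcube t k x = dcube t k x₀ := by
  ext z
  constructor <;> intro hz i
  · exact (hz i).trans (h i)
  · exact (hz i).trans (h i).symm

lemma scaleK_floors {N : ℕ} (x x₀ : Fin N → ℝ) (ω : RSpace N) (k : ℤ)
    (h : ∀ i, ⌊(x i - randOffset ω (k-1) i) / (2:ℝ) ^ (k-1)⌋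
      = ⌊(x₀ i - randOffset ω (k-1) i) / (2:ℝ) ^ (k-1)⌋) :
    ∀ i, ⌊(x i - randOffset ω k i) / (2:ℝ) ^ k⌋
      = ⌊(x₀ i - randOffset ω k i) / (2:ℝ) ^ k⌋ := by
  intro i
  obtain ⟨m, hm⟩ := offset_step (ω i).1 (ω i).2 k
  have hq : (0:ℝ) < 2 ^ ((k:ℤ)-1) := by positivity
  have h2 : ((2:ℝ)) ^ k = 2 * 2 ^ ((k:ℤ)-1) := by
    have h3 : ((2:ℝ)) ^ (1 + (k - 1)) = 2 ^ (1:ℤ) * 2 ^ ((k:ℤ)-1) :=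
      zpow_add₀ (by norm_num : (2:ℝ) ≠ 0) 1 (k-1)
    rw [show (1 : ℤ) + (k - 1) = k by ring] at h3
    rw [h3]
    norm_num
  rw [h2]
  exact floor_step hq m hm (h i)

lemma aux_floor_dist {A B t q : ℝ} (hq : 0 < q)
    (h : ⌊(A - t) / q⌋ = ⌊(B - t) / q⌋) : |A - B| < q := by
  have habs := Int.abs_sub_lt_one_of_floor_eq_floor h
  rw [div_sub_div_same, abs_div, abs_of_pos hq, div_lt_one hq] at habs
  have he : A - t - (B - t) = A - B := by ring
  rwa [he] at habs

lemma mdiffDelta_congr {N : ℕ} (x x₀ y : Fin N → ℝ) (ω : RSpace N) (k : ℤ)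
    (hω : ω ∉ sepG x x₀ (k-1)) :
    mdiffDelta (randOffset ω) k y x = mdiffDelta (randOffset ω) k y x₀ ∧
    mdiffDelta (randOffset ω) k x y = mdiffDelta (randOffset ω) k x₀ y := by
  have hfl : ∀ i, ⌊(x i - randOffset ω (k-1) i) / (2:ℝ) ^ (k-1)⌋
      = ⌊(x₀ i - randOffset ω (k-1) i) / (2:ℝ) ^ (k-1)⌋ := by
    simp only [sepG, Set.mem_setOf_eq, not_exists, not_not] at hω
    exact hω
  have hfk := scaleK_floors x x₀ ω k hfl
  constructor
  · unfold mdiffDelta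
    rw [dcube_congr hfl, dcube_congr hfk]
  · have hswap : ∀ (t : Fin N → ℝ) (k' : ℤ) (cst : ℝ),
        (∀ i, ⌊(x i - t i) / (2:ℝ) ^ k'⌋ = ⌊(x₀ i - t i) / (2:ℝ) ^ k'⌋) →
        (dcube t k' y).indicator (fun _ => cst) x
          = (dcube t k' y).indicator (fun _ => cst) x₀ := by
      intro t k' cst hfl'
      have hmem : x ∈ dcube t k' y ↔ x₀ ∈ dcube t k' y :=
        ⟨fun hm i => (hfl' i).symm.trans (hm i), fun hm i => (hfl' i).trans (hm i)⟩
      by_cases hx : x ∈ dcube t k' y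
      · rw [Set.indicator_of_mem hx, Set.indicator_of_mem (hmem.1 hx)]
      · rw [Set.indicator_of_notMem hx,
          Set.indicator_of_notMem (fun hc => hx (hmem.2 hc))]
    unfold mdiffDelta
    rw [hswap _ _ _ hfl, hswap _ _ _ hfk]

lemma mdiffDelta_abs_le {N : ℕ} (c : ℤ → Fin N → ℝ) (k : ℤ) (y x : Fin N → ℝ) :
    |mdiffDelta c k y x| ≤ 2 * (((2:ℝ) ^ ((k:ℤ)-1)) ^ (N:ℕ))⁻¹ := by
  classical
  have h1 : ∀ (s : Set (Fin N → ℝ)) (cst : ℝ), 0 ≤ cst →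
      |Set.indicator s (fun _ => cst) y| ≤ cst := by
    intro s cst hc
    by_cases hy : y ∈ s
    · rw [Set.indicator_of_mem hy, abs_of_nonneg hc]
    · rw [Set.indicator_of_notMem hy]
      simpa using hc
  have hp1 : (0:ℝ) < ((2:ℝ) ^ ((k:ℤ)-1)) ^ (N:ℕ) := by positivity
  have hinv : (((2:ℝ) ^ k) ^ (N:ℕ))⁻¹ ≤ (((2:ℝ) ^ ((k:ℤ)-1)) ^ (N:ℕ))⁻¹ := by
    apply inv_anti₀ hp1
    apply pow_le_pow_left₀ (by positivity)
    exact zpow_le_zpow_right₀ one_le_two (by omega)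
  have hb1 := h1 (dcube (c (k-1)) (k-1) x) ((((2:ℝ) ^ ((k:ℤ)-1)) ^ (N:ℕ))⁻¹) (by positivity)
  have hb2 := h1 (dcube (c k) k x) ((((2:ℝ) ^ k) ^ (N:ℕ))⁻¹) (by positivity)
  unfold mdiffDelta
  have htri := abs_sub ((dcube (c (k-1)) (k-1) x).indicator
        (fun _ => (((2:ℝ) ^ (k-1)) ^ (N:ℕ))⁻¹) y)
        ((dcube (c k) k x).indicator (fun _ => (((2:ℝ) ^ k) ^ (N:ℕ))⁻¹) y)
  linarith

lemma mdiffDelta_ne {N : ℕ} (c : ℤ → Fin N → ℝ) (k : ℤ) (y x : Fin N → ℝ)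
    (h : mdiffDelta c k y x ≠ 0) : ∀ i, |y i - x i| < 2 ^ k := by
  intro i
  have hk1 : (2:ℝ) ^ ((k:ℤ)-1) ≤ 2 ^ k := zpow_le_zpow_right₀ one_le_two (by omega)
  have hcase : y ∈ dcube (c (k-1)) (k-1) x ∨ y ∈ dcube (c k) k x := by
    by_contra hc
    push_neg at hc
    apply h
    unfold mdiffDelta
    rw [Set.indicator_of_notMem hc.1, Set.indicator_of_notMem hc.2, sub_zero]
  rcases hcase with hy | hy
  · have := aux_floor_dist (by positivity : (0:ℝ) < 2 ^ ((k:ℤ)-1)) (hy i)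
    linarith
  · exact aux_floor_dist (by positivity : (0:ℝ) < 2 ^ (k:ℤ)) (hy i)

lemma tsum_tail_le (k₀ : ℤ) (A : ℝ≥0∞) (f : ℤ → ℝ≥0∞)
    (hf : ∀ k, f k ≤ if k₀ ≤ k then A * (2:ℝ≥0∞)⁻¹ ^ (k - k₀).toNat else 0) :
    ∑' k : ℤ, f k ≤ 2 * A := by
  classical
  set g : ℤ → ℝ≥0∞ := fun k => if k₀ ≤ k then A * (2:ℝ≥0∞)⁻¹ ^ (k - k₀).toNat else 0 with hg
  have h1 : ∑' k : ℤ, f k ≤ ∑' k : ℤ, g k := ENNReal.tsum_le_tsum hf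
  have hsupp : Function.support g ⊆ {k : ℤ | k₀ ≤ k} := by
    intro k hk
    simp only [Function.mem_support, hg] at hk
    by_contra hc
    simp only [Set.mem_setOf_eq] at hc
    exact hk (if_neg hc)
  have h2 : ∑' k : ℤ, g k = ∑' k : ↥{k : ℤ | k₀ ≤ k}, g k :=
    (tsum_subtype_eq_of_support_subset hsupp).symm
  have hι : Function.Injective (fun x : ↥{k : ℤ | k₀ ≤ k} => ((x : ℤ) - k₀).toNat) := by
    rintro ⟨s, hs⟩ ⟨t, ht⟩ h
    simp only [Set.mem_setOf_eq] at hs ht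
    simp only [Subtype.mk.injEq] at h ⊢
    omega
  have h3 : ∑' k : ↥{k : ℤ | k₀ ≤ k}, g k
      ≤ ∑' n : ℕ, A * (2:ℝ≥0∞)⁻¹ ^ n := by
    have he : ∀ k : ↥{k : ℤ | k₀ ≤ k}, g k
        = (fun n : ℕ => A * (2:ℝ≥0∞)⁻¹ ^ n) (((k : ℤ) - k₀).toNat) := by
      intro k
      simp only [hg]
      exact if_pos k.2
    rw [tsum_congr he]
    exact ENNReal.tsum_comp_le_tsum_of_injective hι (fun n => A * (2:ℝ≥0∞)⁻¹ ^ n)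
  have h4 : ∑' n : ℕ, A * (2:ℝ≥0∞)⁻¹ ^ n = 2 * A := by
    rw [ENNReal.tsum_mul_left, ENNReal.tsum_geometric, ENNReal.one_sub_inv_two, inv_inv,
      mul_comm]
  calc ∑' k : ℤ, f k ≤ ∑' k : ℤ, g k := h1
    _ = _ := h2
    _ ≤ _ := h3
    _ = 2 * A := h4

lemma key_bound {N : ℕ} (hN : 0 < N) (x x₀ y : Fin N → ℝ)
    (hd : 0 < dist x x₀) (hsep : 2 * dist x x₀ ≤ dist y x₀)
    (f : RSpace N → ℤ → ℝ)
    (hvan : ∀ ω k, ω ∉ sepG x x₀ (k-1) → f ω k = 0)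
    (hbd : ∀ ω k, |f ω k| ≤ 4 * (((2:ℝ) ^ ((k:ℤ)-1)) ^ (N:ℕ))⁻¹)
    (hsc : ∀ ω k, f ω k ≠ 0 → dist x₀ y ≤ 2 ^ (k+1)) :
    ∫⁻ ω, (∑' k : ℤ, ENNReal.ofReal ((f ω k) ^ 2)) ∂randMeasure N
      ≤ ENNReal.ofReal (128 * N * 8 ^ (2*N+1) * dist x x₀ / dist x₀ y ^ (2*N+1)) := by
  classical
  set d : ℝ := dist x x₀ with hdd
  set R : ℝ := dist x₀ y with hRR
  have hR : 0 < R := by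
    rw [hRR, dist_comm]
    linarith [hsep, hd]
  set k₀ : ℤ := Int.log 2 R - 1 with hk₀def
  set A : ℝ≥0∞ := ENNReal.ofReal (64 * N * 8 ^ (2*N+1) * d / R ^ (2*N+1)) with hA
  set β : ℤ → ℝ≥0∞ := fun k =>
    if R ≤ 2 ^ (k+1) then ENNReal.ofReal ((4 * (((2:ℝ) ^ ((k:ℤ)-1)) ^ (N:ℕ))⁻¹) ^ 2) else 0
    with hβ
  set g : ℤ → RSpace N → ℝ≥0∞ := fun k => (sepG x x₀ (k-1)).indicator (fun _ => β k) with hgg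
  have hpt : ∀ ω k, ENNReal.ofReal ((f ω k) ^ 2) ≤ g k ω := by
    intro ω k
    by_cases h0 : f ω k = 0
    · simp [h0]
    · have hωk : ω ∈ sepG x x₀ (k-1) := by
        by_contra hc
        exact h0 (hvan ω k hc)
      have hsck : R ≤ 2 ^ (k+1) := hsc ω k h0
      have hgv : g k ω = β k := by
        rw [hgg]
        exact Set.indicator_of_mem hωk _
      rw [hgv, hβ]
      simp only
      rw [if_pos hsck]
      apply ENNReal.ofReal_le_ofReal
      rw [← sq_abs]
      exact pow_le_pow_left₀ (abs_nonneg _) (hbd ω k) 2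
  have hperk : ∀ k : ℤ, β k * randMeasure N (sepG x x₀ (k-1))
      ≤ if k₀ ≤ k then A * (2:ℝ≥0∞)⁻¹ ^ (k - k₀).toNat else 0 := by
    intro k
    by_cases hk : R ≤ 2 ^ (k+1)
    · have hk₀ : k₀ ≤ k := by
        have hlog : (2:ℝ) ^ (Int.log 2 R) ≤ R := Int.zpow_log_le_self (by norm_num) hR
        have h5 : (2:ℝ) ^ (Int.log 2 R) ≤ (2:ℝ) ^ (k+1) := le_trans hlog hk
        have h6 := (zpow_le_zpow_iff_right₀ (by norm_num : (1:ℝ) < 2)).1 h5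
        omega
      rw [if_pos hk₀]
      set w : ℝ := (2:ℝ) ^ ((k:ℤ)-1) with hw
      have hw0 : 0 < w := by rw [hw]; positivity
      set n : ℕ := (k - k₀).toNat with hn
      have hnk : (n : ℤ) = k - k₀ := Int.toNat_of_nonneg (by omega)
      -- key real inequality
      have hkey : w⁻¹ ≤ (8/R) * (1/2 : ℝ) ^ n := by
        have e1 : w⁻¹ = (2:ℝ) ^ (1-k) := by
          rw [hw, ← zpow_neg]
          congr 1
          ring
        have e2 : ((1:ℝ)/2) ^ n = (2:ℝ) ^ (k₀ - k) := by
          rw [one_div, inv_pow, ← zpow_natCast (2:ℝ), hnk, ← zpow_neg]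
          congr 1
          ring
        rw [e1, e2]
        have e3 : (2:ℝ) ^ (1-k) = (2:ℝ) ^ (1-k₀) * (2:ℝ) ^ (k₀-k) := by
          rw [← zpow_add₀ (by norm_num : (2:ℝ) ≠ 0)]
          congr 1
          ring
        rw [e3]
        apply mul_le_mul_of_nonneg_right _ (by positivity)
        have hlt : R < (2:ℝ) ^ (Int.log 2 R + 1) := Int.lt_zpow_succ_log_self (by norm_num) R
        have e4 : (2:ℝ) ^ (1-k₀) = 8 / (2:ℝ) ^ (Int.log 2 R + 1) := by
          rw [eq_div_iff (by positivity), ← zpow_add₀ (by norm_num : (2:ℝ) ≠ 0)]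
          rw [show 1 - k₀ + (Int.log 2 R + 1) = 3 by omega]
          norm_num
        rw [e4]
        gcongr
      have hkey3 : (w⁻¹) ^ (2*N+1) ≤ (8/R) ^ (2*N+1) * ((1/2:ℝ)) ^ n := by
        calc (w⁻¹) ^ (2*N+1) ≤ ((8/R) * (1/2:ℝ) ^ n) ^ (2*N+1) :=
              pow_le_pow_left₀ (by positivity) hkey _
          _ = (8/R) ^ (2*N+1) * (((1/2:ℝ)) ^ n) ^ (2*N+1) := mul_pow _ _ _
          _ ≤ (8/R) ^ (2*N+1) * ((1/2:ℝ)) ^ n := by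
              apply mul_le_mul_of_nonneg_left _ (by positivity)
              apply pow_le_of_le_one (by positivity) (pow_le_one₀ (by norm_num) (by norm_num))
                (by omega)
      have eL : (4 * ((w ^ (N:ℕ))⁻¹)) ^ 2 * ((N:ℝ) * (4 * d / w))
          = 64 * N * d * (w⁻¹) ^ (2*N+1) := by
        have hps : (w⁻¹) ^ (2*N+1) = ((w⁻¹) ^ N) ^ 2 * w⁻¹ := by
          rw [pow_add, pow_mul', pow_one]
        rw [hps, inv_pow]
        field_simp
        ring
      have eR : 64 * (N:ℝ) * d * ((8/R) ^ (2*N+1) * ((1/2:ℝ)) ^ n)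
          = (64 * N * 8 ^ (2*N+1) * d / R ^ (2*N+1)) * ((1/2:ℝ)) ^ n := by
        rw [div_pow]
        field_simp
      have hreal : (4 * ((w ^ (N:ℕ))⁻¹)) ^ 2 * ((N:ℝ) * (4 * d / w))
          ≤ (64 * N * 8 ^ (2*N+1) * d / R ^ (2*N+1)) * ((1/2:ℝ)) ^ n := by
        rw [eL, ← eR]
        have hd0 : 0 ≤ d := dist_nonneg
        have hc0 : (0:ℝ) ≤ 64 * N * d := by positivity
        calc 64 * (N:ℝ) * d * (w⁻¹) ^ (2*N+1)
            ≤ 64 * N * d * ((8/R) ^ (2*N+1) * ((1/2:ℝ)) ^ n) :=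
              mul_le_mul_of_nonneg_left hkey3 hc0
          _ = _ := rfl
      calc β k * randMeasure N (sepG x x₀ (k-1))
          ≤ ENNReal.ofReal ((4 * ((w ^ (N:ℕ))⁻¹)) ^ 2)
            * ((N : ℝ≥0∞) * ENNReal.ofReal (4 * d / 2 ^ ((k:ℤ)-1))) := by
            apply mul_le_mul ?_ (measure_sepG_le x x₀ (k-1)) zero_le zero_le
            rw [hβ]
            simp only
            rw [if_pos hk]
        _ = ENNReal.ofReal ((4 * ((w ^ (N:ℕ))⁻¹)) ^ 2 * ((N:ℝ) * (4 * d / w))) := by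
            rw [ENNReal.ofReal_mul (by positivity), ENNReal.ofReal_mul (by positivity),
              ENNReal.ofReal_natCast]
        _ ≤ ENNReal.ofReal ((64 * N * 8 ^ (2*N+1) * d / R ^ (2*N+1)) * ((1/2:ℝ)) ^ n) :=
            ENNReal.ofReal_le_ofReal hreal
        _ = A * (2:ℝ≥0∞)⁻¹ ^ n := by
            rw [ENNReal.ofReal_mul (by positivity), hA, ENNReal.ofReal_pow (by norm_num)]
            congr 2
            rw [one_div, ENNReal.ofReal_inv_of_pos (by norm_num), ENNReal.ofReal_ofNat]
    · rw [hβ]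
      simp only
      rw [if_neg hk, zero_mul]
      exact zero_le
  calc ∫⁻ ω, (∑' k : ℤ, ENNReal.ofReal ((f ω k) ^ 2)) ∂randMeasure N
      ≤ ∫⁻ ω, (∑' k : ℤ, g k ω) ∂randMeasure N :=
        lintegral_mono fun ω => ENNReal.tsum_le_tsum fun k => hpt ω k
    _ = ∑' k : ℤ, ∫⁻ ω, g k ω ∂randMeasure N :=
        lintegral_tsum fun k =>
          (measurable_const.indicator (sepG_measurable x x₀ (k-1))).aemeasurable
    _ = ∑' k : ℤ, β k * randMeasure N (sepG x x₀ (k-1)) :=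
        tsum_congr fun k => by
          rw [hgg]
          exact lintegral_indicator_const (sepG_measurable x x₀ (k-1)) (β k)
    _ ≤ 2 * A := tsum_tail_le k₀ A _ hperk
    _ = ENNReal.ofReal (128 * N * 8 ^ (2*N+1) * d / R ^ (2*N+1)) := by
        rw [hA, ← ENNReal.ofReal_ofNat 2, ← ENNReal.ofReal_mul (by norm_num)]
        congr 1
        ring

lemma scale_cond {N : ℕ} (x x₀ y : Fin N → ℝ) (hsep : 2 * dist x x₀ ≤ dist y x₀) (k : ℤ)
    (h : (∀ i, |y i - x i| < 2 ^ k) ∨ (∀ i, |y i - x₀ i| < 2 ^ k)) :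
    dist x₀ y ≤ 2 ^ (k+1) := by
  have h2 : (2:ℝ) ^ (k+1) = 2 * 2 ^ k := by
    rw [zpow_add_one₀ (by norm_num : (2:ℝ) ≠ 0)]
    ring
  have hknn : (0:ℝ) ≤ 2 ^ k := by positivity
  have hcomm : dist x₀ y = dist y x₀ := dist_comm _ _
  rcases h with h | h
  · have hyx : dist y x ≤ 2 ^ k :=
      (dist_pi_le_iff hknn).2 fun i => by rw [Real.dist_eq]; exact (h i).le
    have htr : dist y x₀ ≤ dist y x + dist x x₀ := dist_triangle _ _ _
    rw [hcomm, h2]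
    linarith
  · have hyx : dist y x₀ ≤ 2 ^ k :=
      (dist_pi_le_iff hknn).2 fun i => by rw [Real.dist_eq]; exact (h i).le
    rw [hcomm, h2]
    linarith


/-- **Calderón–Zygmund smoothness estimate (exponent δ = 1/2) for the random
square-function kernel and its transpose**: if `|y-x₀| ≥ 2|x-x₀| > 0` then
`𝔼_ω ∑_k |Δ_k^{𝒟(ω)} δ_y(x) - Δ_k^{𝒟(ω)} δ_y(x₀)|² ≤ C(N) |x-x₀| |x₀-y|^{-2N-1}`, and the
same bound holds for the transposed kernel. -/
theorem kernel_smoothness (N : ℕ) (hN : 0 < N) :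
    ∃ C : ℝ, 0 < C ∧
      ∀ x x₀ y : Fin N → ℝ, 0 < dist x x₀ → 2 * dist x x₀ ≤ dist y x₀ →
        ((∫⁻ ω, (∑' k : ℤ, ENNReal.ofReal
              ((mdiffDelta (randOffset ω) k y x - mdiffDelta (randOffset ω) k y x₀) ^ 2))
              ∂randMeasure N) ≤
            ENNReal.ofReal (C * dist x x₀ / dist x₀ y ^ (2 * N + 1))) ∧
        ((∫⁻ ω, (∑' k : ℤ, ENNReal.ofReal
              ((mdiffDelta (randOffset ω) k x y - mdiffDelta (randOffset ω) k x₀ y) ^ 2))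
              ∂randMeasure N) ≤
            ENNReal.ofReal (C * dist x x₀ / dist x₀ y ^ (2 * N + 1))) := by
  refine ⟨128 * (N:ℝ) * 8 ^ (2*N+1), ?_, ?_⟩
  · have hN' : (0:ℝ) < N := by exact_mod_cast hN
    positivity
  intro x x₀ y hd hsep
  have hbd : ∀ (c : ℤ → Fin N → ℝ) (k : ℤ) (z z' w : Fin N → ℝ),
      |mdiffDelta c k w z - mdiffDelta c k w z'| ≤ 4 * (((2:ℝ) ^ ((k:ℤ)-1)) ^ (N:ℕ))⁻¹ := by
    intro c k z z' w
    have h1 := mdiffDelta_abs_le c k w z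
    have h2 := mdiffDelta_abs_le c k w z'
    have h3 := abs_sub (mdiffDelta c k w z) (mdiffDelta c k w z')
    linarith
  constructor
  · apply key_bound hN x x₀ y hd hsep
      (fun ω k => mdiffDelta (randOffset ω) k y x - mdiffDelta (randOffset ω) k y x₀)
    · intro ω k hω
      rw [(mdiffDelta_congr x x₀ y ω k hω).1, sub_self]
    · intro ω k
      exact hbd _ k x x₀ y
    · intro ω k h0
      have hne : mdiffDelta (randOffset ω) k y x ≠ 0 ∨
          mdiffDelta (randOffset ω) k y x₀ ≠ 0 := by
        by_contra hc
        push_neg at hc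
        exact h0 (by rw [hc.1, hc.2, sub_self])
      apply scale_cond x x₀ y hsep k
      rcases hne with hne | hne
      · exact Or.inl (mdiffDelta_ne _ k y x hne)
      · exact Or.inr (mdiffDelta_ne _ k y x₀ hne)
  · apply key_bound hN x x₀ y hd hsep
      (fun ω k => mdiffDelta (randOffset ω) k x y - mdiffDelta (randOffset ω) k x₀ y)
    · intro ω k hω
      rw [(mdiffDelta_congr x x₀ y ω k hω).2, sub_self]
    · intro ω k
      have h1 := mdiffDelta_abs_le (randOffset ω) k x y
      have h2 := mdiffDelta_abs_le (randOffset ω) k x₀ y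
      have h3 := abs_sub (mdiffDelta (randOffset ω) k x y) (mdiffDelta (randOffset ω) k x₀ y)
      linarith
    · intro ω k h0
      have hne : mdiffDelta (randOffset ω) k x y ≠ 0 ∨
          mdiffDelta (randOffset ω) k x₀ y ≠ 0 := by
        by_contra hc
        push_neg at hc
        exact h0 (by rw [hc.1, hc.2, sub_self])
      apply scale_cond x x₀ y hsep k
      rcases hne with hne | hne
      · exact Or.inl fun i => by
          rw [abs_sub_comm]
          exact mdiffDelta_ne _ k x y hne i
      · exact Or.inr fun i => by
          rw [abs_sub_comm]
          exact mdiffDelta_ne _ k x₀ y hne i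


end Treil
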